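/- Let J : ℝⁿ × ℝᵖ → ℝ be twice continuously differentiable, let Δθ ∈ ℝᵖ, set θ(t) = θ̄ + t Δθ, and let m̂ : [0,1] → ℝⁿ be differentiable with ∇_m J(m̂(t), θ(t)) = 0 for all t ∈ [0,1] and with H(m̂(t), θ(t)) positive definite for all t. Fix t ∈ [0,1) and suppose B(m̂(t), θ(t)) Δθ ≠ 0. For h > 0 define z(h) = m̂(t+h) − m̂(t) and y(h) = ∇_m J(m̂(t+h), θ(t+h)) − ∇_m J(m̂(t), θ(t)) − h B(m̂(t), θ(t)) Δθ. Then there exists δ > 0 such that the curvature condition y(h)ᵀ z(h) > 0 holds for all 0 < h < δ. -/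

import Mathlib

open scoped RealInnerProductSpace

/-- The gradient of `J` with respect to its first argument `m`. -/
noncomputable def gradM {n p : ℕ}
    (J : EuclideanSpace ℝ (Fin n) × EuclideanSpace ℝ (Fin p) → ℝ)
    (m : EuclideanSpace ℝ (Fin n)) (θ : EuclideanSpace ℝ (Fin p)) :
    EuclideanSpace ℝ (Fin n) :=
  gradient (fun m' => J (m', θ)) m

/-- The Hessian `H(m, θ) = ∇²_{mm} J(m, θ)`. -/
noncomputable def HessM {n p : ℕ}
    (J : EuclideanSpace ℝ (Fin n) × EuclideanSpace ℝ (Fin p) → ℝ)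
    (m : EuclideanSpace ℝ (Fin n)) (θ : EuclideanSpace ℝ (Fin p)) :
    EuclideanSpace ℝ (Fin n) →L[ℝ] EuclideanSpace ℝ (Fin n) :=
  fderiv ℝ (fun m' => gradM J m' θ) m

/-- The mixed second derivative `B(m, θ) = ∇²_{mθ} J(m, θ)`. -/
noncomputable def MixedB {n p : ℕ}
    (J : EuclideanSpace ℝ (Fin n) × EuclideanSpace ℝ (Fin p) → ℝ)
    (m : EuclideanSpace ℝ (Fin n)) (θ : EuclideanSpace ℝ (Fin p)) :
    EuclideanSpace ℝ (Fin p) →L[ℝ] EuclideanSpace ℝ (Fin n) :=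
  fderiv ℝ (fun θ' => gradM J m θ') θ

theorem stmt16 {n p : ℕ}
    (J : EuclideanSpace ℝ (Fin n) × EuclideanSpace ℝ (Fin p) → ℝ)
    (hJ : ContDiff ℝ 2 J)
    (θbar Δθ : EuclideanSpace ℝ (Fin p))
    (θpath : ℝ → EuclideanSpace ℝ (Fin p))
    (hθpath : ∀ t : ℝ, θpath t = θbar + t • Δθ)
    (mhat : ℝ → EuclideanSpace ℝ (Fin n))
    (hdiff : ∀ t ∈ Set.Icc (0:ℝ) 1, DifferentiableWithinAt ℝ mhat (Set.Icc (0:ℝ) 1) t)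
    (hopt : ∀ t ∈ Set.Icc (0:ℝ) 1, gradM J (mhat t) (θpath t) = 0)
    (hpd : ∀ t ∈ Set.Icc (0:ℝ) 1, ∀ x : EuclideanSpace ℝ (Fin n), x ≠ 0 →
      0 < ⟪x, HessM J (mhat t) (θpath t) x⟫)
    (t : ℝ) (ht : t ∈ Set.Ico (0:ℝ) 1)
    (hB : MixedB J (mhat t) (θpath t) Δθ ≠ 0) :
    ∃ δ > (0:ℝ), ∀ h : ℝ, 0 < h → h < δ →
      0 < ⟪gradM J (mhat (t + h)) (θpath (t + h)) - gradM J (mhat t) (θpath t)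
              - h • MixedB J (mhat t) (θpath t) Δθ,
           mhat (t + h) - mhat t⟫ := by
  classical
  have hJd : Differentiable ℝ J := hJ.differentiable two_ne_zero
  set G : EuclideanSpace ℝ (Fin n) × EuclideanSpace ℝ (Fin p) → EuclideanSpace ℝ (Fin n) :=
    fun q => (InnerProductSpace.toDual ℝ (EuclideanSpace ℝ (Fin n))).symm
      ((fderiv ℝ J q).comp (ContinuousLinearMap.inl ℝ (EuclideanSpace ℝ (Fin n)) (EuclideanSpace ℝ (Fin p)))) with hGdef
  have hGeq : ∀ (m : EuclideanSpace ℝ (Fin n)) (θ : EuclideanSpace ℝ (Fin p)), gradM J m θ = G (m, θ) := by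
    intro m θ
    have h1 : HasFDerivAt (fun m' : EuclideanSpace ℝ (Fin n) => J (m', θ))
        ((fderiv ℝ J (m, θ)).comp (ContinuousLinearMap.inl ℝ (EuclideanSpace ℝ (Fin n)) (EuclideanSpace ℝ (Fin p)))) m :=
      (hJd (m, θ)).hasFDerivAt.comp m (hasFDerivAt_prodMk_left m θ)
    simp only [gradM, gradient, hGdef, h1.fderiv]
  have hfd : ContDiff ℝ 1 (fderiv ℝ J) := hJ.fderiv_right (by norm_num)
  have hGc : ContDiff ℝ 1 G :=
    (InnerProductSpace.toDual ℝ (EuclideanSpace ℝ (Fin n))).symm.toLinearIsometry.contDiff.comp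
      (hfd.clm_comp contDiff_const)
  have hGdiff : Differentiable ℝ G := hGc.differentiable one_ne_zero
  have hHess : ∀ (m : EuclideanSpace ℝ (Fin n)) (θ : EuclideanSpace ℝ (Fin p)), HessM J m θ
      = (fderiv ℝ G (m, θ)).comp (ContinuousLinearMap.inl ℝ (EuclideanSpace ℝ (Fin n)) (EuclideanSpace ℝ (Fin p))) := by
    intro m θ
    have h1 : HasFDerivAt (fun m' : EuclideanSpace ℝ (Fin n) => G (m', θ))
        ((fderiv ℝ G (m, θ)).comp (ContinuousLinearMap.inl ℝ (EuclideanSpace ℝ (Fin n)) (EuclideanSpace ℝ (Fin p)))) m :=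
      (hGdiff (m, θ)).hasFDerivAt.comp (f := fun m' => (m', θ)) m (hasFDerivAt_prodMk_left m θ)
    have heq : (fun m' : EuclideanSpace ℝ (Fin n) => gradM J m' θ) = fun m' : EuclideanSpace ℝ (Fin n) => G (m', θ) :=
      funext fun m' => hGeq m' θ
    rw [HessM, heq, h1.fderiv]
  have hMixed : ∀ (m : EuclideanSpace ℝ (Fin n)) (θ : EuclideanSpace ℝ (Fin p)), MixedB J m θ
      = (fderiv ℝ G (m, θ)).comp (ContinuousLinearMap.inr ℝ (EuclideanSpace ℝ (Fin n)) (EuclideanSpace ℝ (Fin p))) := by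
    intro m θ
    have h1 : HasFDerivAt (fun θ' : EuclideanSpace ℝ (Fin p) => G (m, θ'))
        ((fderiv ℝ G (m, θ)).comp (ContinuousLinearMap.inr ℝ (EuclideanSpace ℝ (Fin n)) (EuclideanSpace ℝ (Fin p)))) θ :=
      (hGdiff (m, θ)).hasFDerivAt.comp θ (hasFDerivAt_prodMk_right m θ)
    have heq : (fun θ' : EuclideanSpace ℝ (Fin p) => gradM J m θ') = fun θ' : EuclideanSpace ℝ (Fin p) => G (m, θ') :=
      funext fun θ' => hGeq m θ'
    rw [MixedB, heq, h1.fderiv]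
  have ht01 : t ∈ Set.Icc (0:ℝ) 1 := ⟨ht.1, ht.2.le⟩
  set v := derivWithin mhat (Set.Icc (0:ℝ) 1) t with hvdef
  have hv : HasDerivWithinAt mhat v (Set.Icc (0:ℝ) 1) t :=
    (hdiff t ht01).hasDerivWithinAt
  have hθ : HasDerivAt θpath Δθ t := by
    have hfun : θpath = fun s : ℝ => θbar + s • Δθ := funext hθpath
    rw [hfun]
    simpa using ((hasDerivAt_id t).smul_const Δθ).const_add θbar
  have hq : HasDerivWithinAt (fun s : ℝ => ((mhat s, θpath s) : EuclideanSpace ℝ (Fin n) × EuclideanSpace ℝ (Fin p)))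
      (v, Δθ) (Set.Icc (0:ℝ) 1) t := hv.prodMk hθ.hasDerivWithinAt
  have hg : HasDerivWithinAt (fun s : ℝ => G (mhat s, θpath s))
      (fderiv ℝ G (mhat t, θpath t) (v, Δθ)) (Set.Icc (0:ℝ) 1) t :=
    (hGdiff (mhat t, θpath t)).hasFDerivAt.comp_hasDerivWithinAt (f := fun s : ℝ => ((mhat s, θpath s) : EuclideanSpace ℝ (Fin n) × EuclideanSpace ℝ (Fin p))) t hq
  have hg0 : ∀ s ∈ Set.Icc (0:ℝ) 1, G (mhat s, θpath s) = 0 := fun s hs => by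
    rw [← hGeq]; exact hopt s hs
  have hzero : HasDerivWithinAt (fun s : ℝ => G (mhat s, θpath s))
      0 (Set.Icc (0:ℝ) 1) t :=
    (hasDerivWithinAt_const t _ (0 : EuclideanSpace ℝ (Fin n))).congr hg0 (hg0 t ht01)
  have hu : UniqueDiffWithinAt ℝ (Set.Icc (0:ℝ) 1) t :=
    (uniqueDiffOn_Icc one_pos) t ht01
  have hkey : fderiv ℝ G (mhat t, θpath t) (v, Δθ) = 0 := by
    have h1 := hg.derivWithin hu
    have h2 := hzero.derivWithin hu
    rw [← h1, h2]
  have hdecomp : fderiv ℝ G (mhat t, θpath t) (v, Δθ)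
      = HessM J (mhat t) (θpath t) v + MixedB J (mhat t) (θpath t) Δθ := by
    rw [hHess, hMixed]
    have hsum : ((v, Δθ) : EuclideanSpace ℝ (Fin n) × EuclideanSpace ℝ (Fin p)) = (v, 0) + (0, Δθ) := by simp
    rw [ContinuousLinearMap.comp_apply, ContinuousLinearMap.comp_apply,
      ContinuousLinearMap.inl_apply, ContinuousLinearMap.inr_apply,
      ← map_add, ← hsum]
  set w := MixedB J (mhat t) (θpath t) Δθ with hwdef
  have hHv : HessM J (mhat t) (θpath t) v = -w := by
    have := hdecomp.symm.trans hkey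
    linear_combination (norm := module) this
  have hvne : v ≠ 0 := by
    intro h0
    apply hB
    rw [← neg_eq_zero, ← hHv, h0, map_zero]
  have hwv : ⟪w, v⟫ < 0 := by
    have h1 := hpd t ht01 v hvne
    rw [hHv, inner_neg_right] at h1
    rw [real_inner_comm]
    linarith
  have hfv : HasDerivWithinAt (fun s : ℝ => ⟪w, mhat s⟫) ⟪w, v⟫
      (Set.Icc (0:ℝ) 1) t := by
    have := ((innerSL ℝ w).hasFDerivAt (x := mhat t)).comp_hasDerivWithinAt t hv
    exact this
  have hslope : Filter.Tendsto (slope (fun s : ℝ => ⟪w, mhat s⟫) t)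
      (nhdsWithin t (Set.Icc (0:ℝ) 1 \ {t})) (nhds ⟪w, v⟫) :=
    hasDerivWithinAt_iff_tendsto_slope.mp hfv
  have hev : ∀ᶠ s in nhdsWithin t (Set.Icc (0:ℝ) 1 \ {t}),
      slope (fun s : ℝ => ⟪w, mhat s⟫) t s < 0 :=
    hslope.eventually_lt_const hwv
  rw [eventually_nhdsWithin_iff, Metric.eventually_nhds_iff] at hev
  obtain ⟨ε, hε, hevs⟩ := hev
  refine ⟨min ε (1 - t), lt_min hε (by linarith [ht.2]), fun h hh hhδ => ?_⟩
  have hh1 : h < ε := lt_of_lt_of_le hhδ (min_le_left _ _)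
  have hh2 : h < 1 - t := lt_of_lt_of_le hhδ (min_le_right _ _)
  have hmem : t + h ∈ Set.Icc (0:ℝ) 1 := ⟨by linarith [ht.1], by linarith⟩
  have hmem' : t + h ∈ Set.Icc (0:ℝ) 1 \ {t} :=
    ⟨hmem, by simp; linarith⟩
  have hdist : dist (t + h) t < ε := by
    rw [Real.dist_eq]
    rw [abs_of_pos (by linarith : (0:ℝ) < t + h - t)]
    linarith
  have hs := hevs hdist hmem'
  rw [slope_def_field] at hs
  have hzlt : ⟪w, mhat (t + h)⟫ - ⟪w, mhat t⟫ < 0 := by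
    have hne : t + h - t = h := by ring
    rw [div_neg_iff] at hs
    rcases hs with ⟨_, h2⟩ | ⟨h1, _⟩
    · linarith
    · exact h1
  have hinner : ⟪w, mhat (t + h) - mhat t⟫ < 0 := by
    rw [inner_sub_right]; exact hzlt
  have hg1 : gradM J (mhat (t + h)) (θpath (t + h)) = 0 := hopt _ hmem
  have hg2 : gradM J (mhat t) (θpath t) = 0 := hopt _ ht01
  rw [hg1, hg2]
  have hrw : ((0 : EuclideanSpace ℝ (Fin n)) - 0 - h • w) = (-h) • w := by
    simp [neg_smul]
  rw [hrw, real_inner_smul_left]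
  have : 0 < (-h) * ⟪w, mhat (t + h) - mhat t⟫ :=
    mul_pos_of_neg_of_neg (by linarith) hinner
  exact this
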